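/- arXiv:2504.10379 — 4 statements merged into one kernel-verified Lean document; each statement's English description precedes it below -/
import Mathlib

section
/- Deterministic delocalization criterion. Let d, n ≥ 1 be integers, Λ ⊂ ℤ^d finite, Π ⊆ Ω^Λ, s : ℤ^d → ℝ^n with s_v = 0 for v ∉ Λ, and let η, ζ : ℤ^d × ℝ^n → ℝ be environments. Suppose: φ^η ∈ Ω^Λ minimizes H^{η,Λ} over Ω^Λ; φ⁺ ∈ Ω^Λ minimizes H^{ζ^s,Λ} over Ω^Λ; φ⁻ ∈ Ω^Λ minimizes H^{ζ^{−s},Λ} over Ω^Λ; ψ_η ∈ Π minimizes H^{η,Λ} over Π; ψ_ζ ∈ Π minimizes H^{ζ,Λ} over Π; ρ⁺ ∈ Π minimizes H^{ζ^s,Λ} over Π; and ρ⁻ ∈ Π minimizes H^{ζ^{−s},Λ} over Π. Set Δ₁ := H^{η,Λ}(ψ_η) − H^{ζ,Λ}(ψ_ζ) and Δ₃ := (1/2)·(φ⁺ − φ⁻, −Δ_Λ s), and let Δ₂ ∈ ℝ satisfy H^{ζ,Λ}(χ) − H^{η,Λ}(χ) ≥ Δ₂ for every χ ∈ (Π + s)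 ∪ (Π − s), where Π ± s := {χ ± s : χ ∈ Π}. If Δ₁ + Δ₂ + Δ₃ > ‖∇s‖²_Λ, then φ⁺ ∉ Π or φ⁻ ∉ Π or φ^η ∉ Π. -/
open MeasureTheory ProbabilityTheory

noncomputable section

/-- Vertices of the lattice `ℤ^d`. -/
abbrev Vert (d : ℕ) := Fin d → ℤ

/-- Points of `ℝ^n` with the Euclidean norm. -/
abbrev Pt (n : ℕ) := EuclideanSpace ℝ (Fin n)

/-- Nearest-neighbour adjacency on `ℤ^d`: `‖u - v‖₁ = 1`. -/
abbrev adj {d : ℕ} (u v : Vert d) : Prop := (∑ i, |u i - v i|) = 1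

/-- The Dirichlet energy `‖∇φ‖²_Λ`: the sum of `‖φ_u - φ_v‖²` over unordered
nearest-neighbour edges `{u,v}` meeting `Λ`, each counted once (realized as half
the corresponding sum over ordered pairs). -/
def dirEnergy {d n : ℕ} (Λ : Finset (Vert d)) (φ : Vert d → Pt n) : ℝ :=
  (1 / 2) * ∑ᶠ u : Vert d, ∑ᶠ v : Vert d,
    if adj u v ∧ (u ∈ Λ ∨ v ∈ Λ) then ‖φ u - φ v‖ ^ 2 else 0

/-- The finite-volume Hamiltonian `H^{η,Λ}(φ)`. -/
def hamiltonian {d n : ℕ} (η : Vert d → Pt n → ℝ) (Λ : Finset (Vert d))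
    (φ : Vert d → Pt n) : ℝ :=
  (1 / 2) * dirEnergy Λ φ + ∑ v ∈ Λ, η v (φ v)

/-- The Laplacian `(Δ_Λ φ)_v := ∑_{u ∼ v, {u,v} ∩ Λ ≠ ∅} (φ_u - φ_v)`. -/
def lap {d n : ℕ} (Λ : Finset (Vert d)) (φ : Vert d → Pt n) (v : Vert d) : Pt n :=
  ∑ᶠ u : Vert d, if adj u v ∧ (u ∈ Λ ∨ v ∈ Λ) then φ u - φ v else 0

/-- The pairing `(φ, ψ) := ∑_v φ_v ⬝ ψ_v` (for finitely supported `ψ`). -/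
def pairing {d n : ℕ} (φ ψ : Vert d → Pt n) : ℝ :=
  ∑ᶠ v : Vert d, (inner ℝ (φ v) (ψ v) : ℝ)

/-- The shifted-and-recentered environment `η^s(v,t) := η(v, t - s_v) - η(v, -s_v)`. -/
def shiftEnv {d n : ℕ} (η : Vert d → Pt n → ℝ) (s : Vert d → Pt n) :
    Vert d → Pt n → ℝ :=
  fun v t => η v (t - s v) - η v (-s v)

/-- The box `Λ_L = {-L, …, L}^d`. -/
def box (d : ℕ) (L : ℤ) : Finset (Vert d) :=
  Fintype.piFinset fun _ : Fin d => Finset.Icc (-L) L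

/-- The fractional Brownian covariance `K(t,s) = (‖t‖^{2H} + ‖s‖^{2H} - ‖t-s‖^{2H})/2`. -/
def fbmCov (H : ℝ) {n : ℕ} (t s : Pt n) : ℝ :=
  (‖t‖ ^ (2 * H) + ‖s‖ ^ (2 * H) - ‖t - s‖ ^ (2 * H)) / 2

/-- A fractional Brownian disorder of Hurst parameter `H`. -/
def IsFBMDisorder (d n : ℕ) (H : ℝ) {Ω : Type*} [MeasurableSpace Ω]
    (P : Measure Ω) (η : Ω → Vert d → Pt n → ℝ) : Prop :=
  (∀ v t, Measurable fun ω => η ω v t) ∧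
  (∀ᵐ ω ∂P, ∀ v, Continuous (η ω v) ∧ η ω v 0 = 0) ∧
  iIndepFun (m := fun _ : Vert d => (inferInstance : MeasurableSpace (Pt n → ℝ)))
    (fun v ω => η ω v) P ∧
  ∀ (v : Vert d) (k : ℕ) (t : Fin k → Pt n) (c : Fin k → ℝ),
    P.map (fun ω => ∑ i, c i * η ω v (t i)) =
      gaussianReal 0 (Real.toNNReal (∑ i, ∑ j, c i * c j * fbmCov H (t i) (t j)))

/-- A ground configuration (minimal surface) in a finite set `Λ` with zero
boundary values. -/
def IsGroundConfig {d n : ℕ} {Ω : Type*} [MeasurableSpace Ω] (P : Measure Ω)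
    (η : Ω → Vert d → Pt n → ℝ) (Λ : Finset (Vert d)) (φ : Ω → Vert d → Pt n) : Prop :=
  Measurable φ ∧
  ∀ᵐ ω ∂P, (∀ v ∉ Λ, φ ω v = 0) ∧
    ∀ ψ : Vert d → Pt n, (∀ v ∉ Λ, ψ v = 0) →
      hamiltonian (η ω) Λ (φ ω) ≤ hamiltonian (η ω) Λ ψ

/-- The ground energy `GE^{η,Λ}`. -/
def groundEnergy {d n : ℕ} {Ω : Type*} [MeasurableSpace Ω]
    (η : Ω → Vert d → Pt n → ℝ) (Λ : Finset (Vert d)) (φ : Ω → Vert d → Pt n)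
    (ω : Ω) : ℝ :=
  hamiltonian (η ω) Λ (φ ω)


namespace Deloc

variable {d n : ℕ}

def nbhd (u : Vert d) : Finset (Vert d) :=
  Fintype.piFinset fun i => Finset.Icc (u i - 1) (u i + 1)

lemma mem_nbhd_of_adj {u v : Vert d} (h : adj u v) : v ∈ nbhd u := by
  rw [nbhd, Fintype.mem_piFinset]
  intro i
  rw [Finset.mem_Icc]
  have h1 : |u i - v i| ≤ 1 := by
    calc |u i - v i| ≤ ∑ j, |u j - v j| :=
          Finset.single_le_sum (f := fun j => |u j - v j|) (fun j _ => abs_nonneg _) (Finset.mem_univ i)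
      _ = 1 := h
  have := abs_le.mp h1
  omega

lemma adj_symm {u v : Vert d} (h : adj u v) : adj v u := by
  show (∑ i, |v i - u i|) = 1
  rw [← h]
  exact Finset.sum_congr rfl fun i _ => abs_sub_comm _ _

def big (Λ : Finset (Vert d)) : Finset (Vert d) := Λ ∪ Λ.biUnion nbhd

lemma subset_big (Λ : Finset (Vert d)) : Λ ⊆ big Λ := Finset.subset_union_left

lemma mem_big_left {Λ : Finset (Vert d)} {u v : Vert d} (h : adj u v)
    (hm : u ∈ Λ ∨ v ∈ Λ) : u ∈ big Λ := by
  rcases hm with hu | hv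
  · exact subset_big Λ hu
  · exact Finset.mem_union_right _ (Finset.mem_biUnion.2 ⟨v, hv, mem_nbhd_of_adj (adj_symm h)⟩)

lemma mem_big_right {Λ : Finset (Vert d)} {u v : Vert d} (h : adj u v)
    (hm : u ∈ Λ ∨ v ∈ Λ) : v ∈ big Λ := by
  rcases hm with hu | hv
  · exact Finset.mem_union_right _ (Finset.mem_biUnion.2 ⟨u, hu, mem_nbhd_of_adj h⟩)
  · exact subset_big Λ hv

lemma dirEnergy_eq_sum (Λ : Finset (Vert d)) (φ : Vert d → Pt n) :
    dirEnergy Λ φ = (1 / 2) * ∑ u ∈ big Λ, ∑ v ∈ big Λ,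
      (if adj u v ∧ (u ∈ Λ ∨ v ∈ Λ) then ‖φ u - φ v‖ ^ 2 else 0) := by
  rw [dirEnergy]
  congr 1
  have hinner : ∀ u : Vert d,
      (∑ᶠ v : Vert d, if adj u v ∧ (u ∈ Λ ∨ v ∈ Λ) then ‖φ u - φ v‖ ^ 2 else 0)
        = ∑ v ∈ big Λ, (if adj u v ∧ (u ∈ Λ ∨ v ∈ Λ) then ‖φ u - φ v‖ ^ 2 else 0) := by
    intro u
    apply finsum_eq_finset_sum_of_support_subset
    intro v hv
    by_contra hvB
    apply hv
    simp only [Function.mem_support, ne_eq, not_not] at *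
    rw [if_neg]
    intro hc
    exact hvB (mem_big_right hc.1 hc.2)
  rw [show (fun u => ∑ᶠ v : Vert d, if adj u v ∧ (u ∈ Λ ∨ v ∈ Λ) then ‖φ u - φ v‖ ^ 2 else 0)
      = fun u => ∑ v ∈ big Λ, (if adj u v ∧ (u ∈ Λ ∨ v ∈ Λ) then ‖φ u - φ v‖ ^ 2 else 0)
    from funext hinner]
  apply finsum_eq_finset_sum_of_support_subset
  intro u hu
  by_contra huB
  apply hu
  simp only [Function.mem_support, ne_eq, not_not]
  apply Finset.sum_eq_zero
  intro v _
  rw [if_neg]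
  intro hc
  exact huB (mem_big_left hc.1 hc.2)

lemma lap_eq_sum (Λ : Finset (Vert d)) (s : Vert d → Pt n) (v : Vert d) :
    lap Λ s v = ∑ u ∈ big Λ, (if adj u v ∧ (u ∈ Λ ∨ v ∈ Λ) then s u - s v else 0) := by
  rw [lap]
  apply finsum_eq_finset_sum_of_support_subset
  intro u hu
  by_contra huB
  apply hu
  simp only [Function.mem_support, ne_eq, not_not]
  rw [if_neg]
  intro hc
  exact huB (mem_big_left hc.1 hc.2)

lemma pairing_eq_sum {Λ : Finset (Vert d)} {χ : Vert d → Pt n}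
    (hχ : ∀ v ∉ Λ, χ v = 0) (ψ : Vert d → Pt n) {t : Finset (Vert d)} (ht : Λ ⊆ t) :
    pairing χ ψ = ∑ v ∈ t, (inner ℝ (χ v) (ψ v) : ℝ) := by
  rw [pairing]
  apply finsum_eq_finset_sum_of_support_subset
  intro v hv
  by_contra hvt
  apply hv
  simp only [Function.mem_support, ne_eq, not_not]
  rw [hχ v (fun h => hvt (ht h)), inner_zero_left]


lemma cond_symm {Λ : Finset (Vert d)} {u v : Vert d} :
    (adj u v ∧ (u ∈ Λ ∨ v ∈ Λ)) ↔ (adj v u ∧ (v ∈ Λ ∨ u ∈ Λ)) :=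
  ⟨fun h => ⟨adj_symm h.1, h.2.symm⟩, fun h => ⟨adj_symm h.1, h.2.symm⟩⟩

lemma cross (Λ : Finset (Vert d)) (χ s : Vert d → Pt n)
    (hχ : ∀ v ∉ Λ, χ v = 0) :
    ∑ u ∈ big Λ, ∑ v ∈ big Λ,
      (if adj u v ∧ (u ∈ Λ ∨ v ∈ Λ) then (inner ℝ (χ u - χ v) (s u - s v) : ℝ) else 0)
    = 2 * pairing χ (fun v => -lap Λ s v) := by
  have hsplit : ∀ u v : Vert d,
      (if adj u v ∧ (u ∈ Λ ∨ v ∈ Λ) then (inner ℝ (χ u - χ v) (s u - s v) : ℝ) else 0)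
      = (if adj u v ∧ (u ∈ Λ ∨ v ∈ Λ) then (inner ℝ (χ u) (s u - s v) : ℝ) else 0)
        + (if adj u v ∧ (u ∈ Λ ∨ v ∈ Λ) then (inner ℝ (χ v) (s v - s u) : ℝ) else 0) := by
    intro u v
    split_ifs with h
    · rw [inner_sub_left]
      have : (inner ℝ (χ v) (s v - s u) : ℝ) = -(inner ℝ (χ v) (s u - s v) : ℝ) := by
        rw [← inner_neg_right, neg_sub]
      rw [this]; ring
    · ring
  simp_rw [hsplit, Finset.sum_add_distrib]
  have hswap : (∑ u ∈ big Λ, ∑ v ∈ big Λ,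
        (if adj u v ∧ (u ∈ Λ ∨ v ∈ Λ) then (inner ℝ (χ v) (s v - s u) : ℝ) else 0))
      = ∑ u ∈ big Λ, ∑ v ∈ big Λ,
        (if adj u v ∧ (u ∈ Λ ∨ v ∈ Λ) then (inner ℝ (χ u) (s u - s v) : ℝ) else 0) := by
    rw [Finset.sum_comm]
    refine Finset.sum_congr rfl fun u _ => Finset.sum_congr rfl fun v _ => ?_
    exact if_congr cond_symm rfl rfl
  rw [hswap, ← two_mul]
  congr 1
  have hpull : ∀ u : Vert d,
      (∑ v ∈ big Λ, (if adj u v ∧ (u ∈ Λ ∨ v ∈ Λ) then (inner ℝ (χ u) (s u - s v) : ℝ) else 0))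
      = (inner ℝ (χ u) (-lap Λ s u) : ℝ) := by
    intro u
    have h1 : ∀ v : Vert d,
        (if adj u v ∧ (u ∈ Λ ∨ v ∈ Λ) then (inner ℝ (χ u) (s u - s v) : ℝ) else 0)
        = (inner ℝ (χ u) (if adj u v ∧ (u ∈ Λ ∨ v ∈ Λ) then s u - s v else 0) : ℝ) := by
      intro v; split_ifs with h
      · rfl
      · rw [inner_zero_right]
    simp_rw [h1, ← inner_sum]
    congr 1
    rw [lap_eq_sum, ← Finset.sum_neg_distrib]
    refine Finset.sum_congr rfl fun v _ => ?_
    rw [apply_ite Neg.neg, neg_sub, neg_zero]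
    exact if_congr cond_symm rfl rfl
  simp_rw [hpull]
  exact (pairing_eq_sum hχ _ (subset_big Λ)).symm


lemma dE_add (Λ : Finset (Vert d)) (χ s : Vert d → Pt n)
    (hχ : ∀ v ∉ Λ, χ v = 0) :
    dirEnergy Λ (fun v => χ v + s v)
      = dirEnergy Λ χ + 2 * pairing χ (fun v => -lap Λ s v) + dirEnergy Λ s := by
  have hterm : ∀ u v : Vert d,
      (if adj u v ∧ (u ∈ Λ ∨ v ∈ Λ) then ‖(χ u + s u) - (χ v + s v)‖ ^ 2 else 0)
      = (if adj u v ∧ (u ∈ Λ ∨ v ∈ Λ) then ‖χ u - χ v‖ ^ 2 else 0)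
        + (2 : ℝ) * (if adj u v ∧ (u ∈ Λ ∨ v ∈ Λ) then (inner ℝ (χ u - χ v) (s u - s v) : ℝ) else 0)
        + (if adj u v ∧ (u ∈ Λ ∨ v ∈ Λ) then ‖s u - s v‖ ^ 2 else 0) := by
    intro u v
    split_ifs with h
    · have harg : (χ u + s u) - (χ v + s v) = (χ u - χ v) + (s u - s v) := by abel
      rw [harg, norm_add_sq_real]
    · ring
  rw [dirEnergy_eq_sum, dirEnergy_eq_sum, dirEnergy_eq_sum]
  simp_rw [hterm, Finset.sum_add_distrib, ← Finset.mul_sum]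
  rw [cross Λ χ s hχ]
  ring

lemma pairing_self_lap (Λ : Finset (Vert d)) (s : Vert d → Pt n)
    (hs : ∀ v ∉ Λ, s v = 0) :
    pairing s (fun v => -lap Λ s v) = dirEnergy Λ s := by
  have h4 : dirEnergy Λ (fun v => s v + s v) = 4 * dirEnergy Λ s := by
    rw [dirEnergy_eq_sum, dirEnergy_eq_sum]
    rw [show (4 : ℝ) * ((1 / 2) * ∑ u ∈ big Λ, ∑ v ∈ big Λ,
        (if adj u v ∧ (u ∈ Λ ∨ v ∈ Λ) then ‖s u - s v‖ ^ 2 else 0))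
      = (1 / 2) * ∑ u ∈ big Λ, ∑ v ∈ big Λ,
        (4 : ℝ) * (if adj u v ∧ (u ∈ Λ ∨ v ∈ Λ) then ‖s u - s v‖ ^ 2 else 0) by
        simp_rw [← Finset.mul_sum]; ring]
    congr 1
    refine Finset.sum_congr rfl fun u _ => Finset.sum_congr rfl fun v _ => ?_
    split_ifs with h
    · have harg : (s u + s u) - (s v + s v) = (2 : ℝ) • (s u - s v) := by
        rw [two_smul]; abel
      rw [harg, norm_smul]
      simp
      ring
    · ring
  have := dE_add Λ s s hs
  rw [h4] at this
  linarith

lemma dE_neg (Λ : Finset (Vert d)) (s : Vert d → Pt n) :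
    dirEnergy Λ (fun v => -s v) = dirEnergy Λ s := by
  rw [dirEnergy_eq_sum, dirEnergy_eq_sum]
  congr 1
  refine Finset.sum_congr rfl fun u _ => Finset.sum_congr rfl fun v _ => ?_
  refine if_congr Iff.rfl ?_ rfl
  rw [show (-s u) - (-s v) = -(s u - s v) by abel, norm_neg]

lemma lap_neg (Λ : Finset (Vert d)) (s : Vert d → Pt n) (v : Vert d) :
    lap Λ (fun w => -s w) v = -lap Λ s v := by
  rw [lap_eq_sum, lap_eq_sum, ← Finset.sum_neg_distrib]
  refine Finset.sum_congr rfl fun u _ => ?_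
  rw [apply_ite Neg.neg, neg_zero]
  refine if_congr Iff.rfl ?_ rfl
  abel

lemma ham_shift (ζ : Vert d → Pt n → ℝ) (Λ : Finset (Vert d)) (χ s : Vert d → Pt n)
    (hχ : ∀ v ∉ Λ, χ v = 0) :
    hamiltonian (shiftEnv ζ s) Λ (fun v => χ v + s v)
      = hamiltonian ζ Λ χ + pairing χ (fun v => -lap Λ s v)
        + (1 / 2) * dirEnergy Λ s - ∑ v ∈ Λ, ζ v (-s v) := by
  rw [hamiltonian, hamiltonian, dE_add Λ χ s hχ]
  have henv : ∑ v ∈ Λ, shiftEnv ζ s v (χ v + s v)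
      = ∑ v ∈ Λ, ζ v (χ v) - ∑ v ∈ Λ, ζ v (-s v) := by
    rw [← Finset.sum_sub_distrib]
    refine Finset.sum_congr rfl fun v _ => ?_
    rw [shiftEnv]
    congr 2
    abel
  rw [henv]
  ring


lemma ham_shift_neg (ζ : Vert d → Pt n → ℝ) (Λ : Finset (Vert d)) (χ s : Vert d → Pt n)
    (hχ : ∀ v ∉ Λ, χ v = 0) :
    hamiltonian (shiftEnv ζ (fun v => -s v)) Λ (fun v => χ v - s v)
      = hamiltonian ζ Λ χ - pairing χ (fun v => -lap Λ s v)
        + (1 / 2) * dirEnergy Λ s - ∑ v ∈ Λ, ζ v (s v) := by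
  have h := ham_shift ζ Λ χ (fun v => -s v) hχ
  rw [show (fun v => χ v + -s v) = (fun v => χ v - s v)
      from funext fun v => (sub_eq_add_neg _ _).symm] at h
  rw [h, dE_neg]
  have h1 : pairing χ (fun v => -lap Λ (fun w => -s w) v)
      = -pairing χ (fun v => -lap Λ s v) := by
    rw [pairing_eq_sum hχ _ (subset_refl Λ), pairing_eq_sum hχ _ (subset_refl Λ),
      ← Finset.sum_neg_distrib]
    refine Finset.sum_congr rfl fun v _ => ?_
    simp [lap_neg, inner_neg_right]
  rw [h1]
  have h2 : ∑ v ∈ Λ, ζ v (- -s v) = ∑ v ∈ Λ, ζ v (s v) :=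
    Finset.sum_congr rfl fun v _ => by rw [neg_neg]
  rw [h2]
  ring

lemma pairing_sub' {Λ : Finset (Vert d)} {f g : Vert d → Pt n}
    (hf : ∀ v ∉ Λ, f v = 0) (hg : ∀ v ∉ Λ, g v = 0) (ψ : Vert d → Pt n) :
    pairing (fun v => f v - g v) ψ = pairing f ψ - pairing g ψ := by
  rw [pairing_eq_sum (Λ := Λ) (fun v hv => by rw [hf v hv, hg v hv, sub_zero]) ψ (subset_refl Λ),
    pairing_eq_sum hf ψ (subset_refl Λ), pairing_eq_sum hg ψ (subset_refl Λ),
    ← Finset.sum_sub_distrib]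
  exact Finset.sum_congr rfl fun v _ => inner_sub_left _ _ _

lemma pairing_add' {Λ : Finset (Vert d)} {f g : Vert d → Pt n}
    (hf : ∀ v ∉ Λ, f v = 0) (hg : ∀ v ∉ Λ, g v = 0) (ψ : Vert d → Pt n) :
    pairing (fun v => f v + g v) ψ = pairing f ψ + pairing g ψ := by
  rw [pairing_eq_sum (Λ := Λ) (fun v hv => by rw [hf v hv, hg v hv, add_zero]) ψ (subset_refl Λ),
    pairing_eq_sum hf ψ (subset_refl Λ), pairing_eq_sum hg ψ (subset_refl Λ),
    ← Finset.sum_add_distrib]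
  exact Finset.sum_congr rfl fun v _ => inner_add_left _ _ _

end Deloc

/-- **Deterministic delocalization criterion** (Proposition 4.2). -/
theorem deterministic_delocalization {d n : ℕ} (hd : 1 ≤ d) (hn : 1 ≤ n)
    (Λ : Finset (Vert d)) (Pi : Set (Vert d → Pt n))
    (hPi : ∀ χ ∈ Pi, ∀ v ∉ Λ, χ v = 0)
    (s : Vert d → Pt n) (hs : ∀ v ∉ Λ, s v = 0)
    (η ζ : Vert d → Pt n → ℝ)
    (φη φp φm ψη ψζ ρp ρm : Vert d → Pt n)
    (hφη : (∀ v ∉ Λ, φη v = 0) ∧ ∀ χ : Vert d → Pt n, (∀ v ∉ Λ, χ v = 0) →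
      hamiltonian η Λ φη ≤ hamiltonian η Λ χ)
    (hφp : (∀ v ∉ Λ, φp v = 0) ∧ ∀ χ : Vert d → Pt n, (∀ v ∉ Λ, χ v = 0) →
      hamiltonian (shiftEnv ζ s) Λ φp ≤ hamiltonian (shiftEnv ζ s) Λ χ)
    (hφm : (∀ v ∉ Λ, φm v = 0) ∧ ∀ χ : Vert d → Pt n, (∀ v ∉ Λ, χ v = 0) →
      hamiltonian (shiftEnv ζ (fun v => -s v)) Λ φm ≤
        hamiltonian (shiftEnv ζ (fun v => -s v)) Λ χ)
    (hψη : ψη ∈ Pi ∧ ∀ χ ∈ Pi, hamiltonian η Λ ψη ≤ hamiltonian η Λ χ)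
    (hψζ : ψζ ∈ Pi ∧ ∀ χ ∈ Pi, hamiltonian ζ Λ ψζ ≤ hamiltonian ζ Λ χ)
    (hρp : ρp ∈ Pi ∧ ∀ χ ∈ Pi,
      hamiltonian (shiftEnv ζ s) Λ ρp ≤ hamiltonian (shiftEnv ζ s) Λ χ)
    (hρm : ρm ∈ Pi ∧ ∀ χ ∈ Pi,
      hamiltonian (shiftEnv ζ (fun v => -s v)) Λ ρm ≤
        hamiltonian (shiftEnv ζ (fun v => -s v)) Λ χ)
    (Δ₂ : ℝ)
    (hΔ₂ : ∀ χ : Vert d → Pt n,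
      ((∃ χ' ∈ Pi, χ = fun v => χ' v + s v) ∨ (∃ χ' ∈ Pi, χ = fun v => χ' v - s v)) →
        Δ₂ ≤ hamiltonian ζ Λ χ - hamiltonian η Λ χ)
    (hgap : dirEnergy Λ s <
      (hamiltonian η Λ ψη - hamiltonian ζ Λ ψζ) + Δ₂ +
        (1 / 2) * pairing (fun v => φp v - φm v) (fun v => -lap Λ s v)) :
    φp ∉ Pi ∨ φm ∉ Pi ∨ φη ∉ Pi := by
  by_contra hcon
  push_neg at hcon
  obtain ⟨hp, hm, he⟩ := hcon
  have hsψζ : ∀ v ∉ Λ, ψζ v = 0 := hPi ψζ hψζ.1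
  have hsφp : ∀ v ∉ Λ, φp v = 0 := hφp.1
  have hsφm : ∀ v ∉ Λ, φm v = 0 := hφm.1
  have hsφps : ∀ v ∉ Λ, φp v - s v = 0 := fun v hv => by rw [hsφp v hv, hs v hv, sub_zero]
  have hsφms : ∀ v ∉ Λ, φm v + s v = 0 := fun v hv => by rw [hsφm v hv, hs v hv, add_zero]
  -- identity instantiations
  have e2 := Deloc.ham_shift ζ Λ ψζ s hsψζ
  have e1 : hamiltonian (shiftEnv ζ s) Λ φp
      = hamiltonian ζ Λ (fun v => φp v - s v)
        + pairing (fun v => φp v - s v) (fun v => -lap Λ s v)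
        + (1 / 2) * dirEnergy Λ s - ∑ v ∈ Λ, ζ v (-s v) := by
    have h := Deloc.ham_shift ζ Λ (fun v => φp v - s v) s hsφps
    rwa [show (fun v => (φp v - s v) + s v) = φp from funext fun v => sub_add_cancel _ _] at h
  have e4 := Deloc.ham_shift_neg ζ Λ ψζ s hsψζ
  have e3 : hamiltonian (shiftEnv ζ (fun v => -s v)) Λ φm
      = hamiltonian ζ Λ (fun v => φm v + s v)
        - pairing (fun v => φm v + s v) (fun v => -lap Λ s v)
        + (1 / 2) * dirEnergy Λ s - ∑ v ∈ Λ, ζ v (s v) := by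
    have h := Deloc.ham_shift_neg ζ Λ (fun v => φm v + s v) s hsφms
    rwa [show (fun v => (φm v + s v) - s v) = φm from funext fun v => add_sub_cancel_right _ _] at h
  -- minimality inequalities
  have E1 : hamiltonian (shiftEnv ζ s) Λ φp ≤ hamiltonian (shiftEnv ζ s) Λ (fun v => ψζ v + s v) :=
    hφp.2 _ (fun v hv => by rw [hsψζ v hv, hs v hv, add_zero])
  have E2 : hamiltonian (shiftEnv ζ (fun v => -s v)) Λ φm
      ≤ hamiltonian (shiftEnv ζ (fun v => -s v)) Λ (fun v => ψζ v - s v) :=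
    hφm.2 _ (fun v hv => by rw [hsψζ v hv, hs v hv, sub_zero])
  have L1 : Δ₂ ≤ hamiltonian ζ Λ (fun v => φp v - s v) - hamiltonian η Λ (fun v => φp v - s v) :=
    hΔ₂ _ (Or.inr ⟨φp, hp, rfl⟩)
  have L2 : Δ₂ ≤ hamiltonian ζ Λ (fun v => φm v + s v) - hamiltonian η Λ (fun v => φm v + s v) :=
    hΔ₂ _ (Or.inl ⟨φm, hm, rfl⟩)
  have M1 : hamiltonian η Λ φη ≤ hamiltonian η Λ (fun v => φp v - s v) := hφη.2 _ hsφps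
  have M2 : hamiltonian η Λ φη ≤ hamiltonian η Λ (fun v => φm v + s v) := hφη.2 _ hsφms
  have M3 : hamiltonian η Λ ψη ≤ hamiltonian η Λ φη := hψη.2 φη he
  -- pairing linearity
  have p1 : pairing (fun v => φp v - s v) (fun v => -lap Λ s v)
      = pairing φp (fun v => -lap Λ s v) - pairing s (fun v => -lap Λ s v) :=
    Deloc.pairing_sub' hsφp hs _
  have p2 : pairing (fun v => φm v + s v) (fun v => -lap Λ s v)
      = pairing φm (fun v => -lap Λ s v) + pairing s (fun v => -lap Λ s v) :=
    Deloc.pairing_add' hsφm hs _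
  have p3 : pairing s (fun v => -lap Λ s v) = dirEnergy Λ s := Deloc.pairing_self_lap Λ s hs
  have p4 : pairing (fun v => φp v - φm v) (fun v => -lap Λ s v)
      = pairing φp (fun v => -lap Λ s v) - pairing φm (fun v => -lap Λ s v) :=
    Deloc.pairing_sub' hsφp hsφm _
  linarith


end
end

section
/- Comparison of the minimizer with its shifted version (deterministic part of Proposition 4.4). Let d, n ≥ 1 be integers, Λ ⊂ ℤ^d finite, η : ℤ^d × ℝ^n → ℝ an environment, and s ∈ Ω^Λ (i.e. s : ℤ^d → ℝ^n with s_v = 0 for v ∉ Λ). Suppose φ ∈ Ω^Λ minimizes H^{η,Λ} over Ω^Λ and ψ ∈ Ω^Λ minimizes H^{η^{−s},Λ} over Ω^Λ. Then 0 ≤ H^{η,Λ}(ψ + s) − H^{η,Λ}(φ) ≤ (ψ + s − φ, −Δ_Λ s). -/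
open MeasureTheory ProbabilityTheory

noncomputable section

section Aux
variable {d n : ℕ}

lemma adj_comm' (u v : Vert d) : adj u v ↔ adj v u := by
  unfold adj
  rw [show (∑ i, |u i - v i|) = ∑ i, |v i - u i| from
    Finset.sum_congr rfl fun i _ => abs_sub_comm _ _]

def nbrs (u : Vert d) : Finset (Vert d) :=
  Fintype.piFinset fun i => Finset.Icc (u i - 1) (u i + 1)

lemma mem_nbrs_of_adj {u v : Vert d} (h : adj u v) : v ∈ nbrs u := by
  rw [nbrs, Fintype.mem_piFinset]
  intro i
  have h1 : |u i - v i| ≤ 1 := by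
    rw [← h]
    exact Finset.single_le_sum (f := fun j => |u j - v j|)
      (fun j _ => abs_nonneg _) (Finset.mem_univ i)
  rw [abs_le] at h1
  simp only [Finset.mem_Icc]; omega

def bigS (Λ : Finset (Vert d)) : Finset (Vert d) := Λ ∪ Λ.biUnion nbrs

lemma mem_bigS_left {Λ : Finset (Vert d)} {u v : Vert d} (h : adj u v)
    (h2 : u ∈ Λ ∨ v ∈ Λ) : u ∈ bigS Λ := by
  rcases h2 with h2 | h2
  · exact Finset.mem_union_left _ h2
  · refine Finset.mem_union_right _ (Finset.mem_biUnion.2 ⟨v, h2, ?_⟩)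
    exact mem_nbrs_of_adj ((adj_comm' u v).1 h)

lemma mem_bigS_right {Λ : Finset (Vert d)} {u v : Vert d} (h : adj u v)
    (h2 : u ∈ Λ ∨ v ∈ Λ) : v ∈ bigS Λ :=
  mem_bigS_left ((adj_comm' u v).1 h) h2.symm

lemma dirEnergy_eq_sum (Λ : Finset (Vert d)) (φ : Vert d → Pt n) :
    dirEnergy Λ φ = (1 / 2) * ∑ u ∈ bigS Λ, ∑ v ∈ bigS Λ,
      (if adj u v ∧ (u ∈ Λ ∨ v ∈ Λ) then ‖φ u - φ v‖ ^ 2 else 0) := by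
  unfold dirEnergy
  congr 1
  rw [finsum_eq_finset_sum_of_support_subset]
  · refine Finset.sum_congr rfl fun u _ => ?_
    rw [finsum_eq_finset_sum_of_support_subset]
    intro v hv
    simp only [Function.mem_support] at hv
    by_cases hc : adj u v ∧ (u ∈ Λ ∨ v ∈ Λ)
    · exact mem_bigS_right hc.1 hc.2
    · simp [hc] at hv
  · intro u hu
    simp only [Function.mem_support] at hu
    by_contra hus
    apply hu
    apply finsum_eq_zero_of_forall_eq_zero
    intro v
    by_cases hc : adj u v ∧ (u ∈ Λ ∨ v ∈ Λ)
    · exact absurd (mem_bigS_left hc.1 hc.2) hus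
    · simp [hc]

lemma lap_eq_sum (Λ : Finset (Vert d)) (s : Vert d → Pt n) (w : Vert d) :
    lap Λ s w = ∑ u ∈ bigS Λ,
      (if adj u w ∧ (u ∈ Λ ∨ w ∈ Λ) then s u - s w else 0) := by
  unfold lap
  rw [finsum_eq_finset_sum_of_support_subset]
  intro u hu
  simp only [Function.mem_support] at hu
  by_cases hc : adj u w ∧ (u ∈ Λ ∨ w ∈ Λ)
  · exact mem_bigS_left hc.1 hc.2
  · simp [hc] at hu

lemma lap_eq_zero {Λ : Finset (Vert d)} (s : Vert d → Pt n) {w : Vert d}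
    (hw : w ∉ bigS Λ) : lap Λ s w = 0 := by
  unfold lap
  apply finsum_eq_zero_of_forall_eq_zero
  intro u
  by_cases hc : adj u w ∧ (u ∈ Λ ∨ w ∈ Λ)
  · exact absurd (mem_bigS_right hc.1 hc.2) hw
  · simp [hc]

lemma pairing_eq_sum (Λ : Finset (Vert d)) (χ s : Vert d → Pt n) :
    pairing χ (fun v => -lap Λ s v) =
      ∑ v ∈ bigS Λ, (inner ℝ (χ v) (-lap Λ s v) : ℝ) := by
  unfold pairing
  rw [finsum_eq_finset_sum_of_support_subset]
  intro v hv
  simp only [Function.mem_support] at hv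
  by_contra hvs
  rw [lap_eq_zero s hvs] at hv
  simp at hv

lemma cross_sum (Λ : Finset (Vert d)) (χ s : Vert d → Pt n) :
    ∑ u ∈ bigS Λ, ∑ v ∈ bigS Λ,
      (if adj u v ∧ (u ∈ Λ ∨ v ∈ Λ) then (inner ℝ (χ u - χ v) (s u - s v) : ℝ) else 0)
    = 2 * pairing χ (fun v => -lap Λ s v) := by
  have hor : ∀ u v : Vert d,
      (adj u v ∧ (u ∈ Λ ∨ v ∈ Λ)) ↔ (adj v u ∧ (v ∈ Λ ∨ u ∈ Λ)) := by
    intro u v; rw [adj_comm' u v, or_comm]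
  have key : ∀ u v : Vert d,
      (if adj u v ∧ (u ∈ Λ ∨ v ∈ Λ) then (inner ℝ (χ u - χ v) (s u - s v) : ℝ) else 0)
      = (if adj u v ∧ (u ∈ Λ ∨ v ∈ Λ) then (inner ℝ (χ u) (s u - s v) : ℝ) else 0)
        - (if adj u v ∧ (u ∈ Λ ∨ v ∈ Λ) then (inner ℝ (χ v) (s u - s v) : ℝ) else 0) := by
    intro u v; split_ifs with h
    · rw [inner_sub_left]
    · ring
  simp only [key, Finset.sum_sub_distrib]
  have hB : (∑ u ∈ bigS Λ, ∑ v ∈ bigS Λ,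
        (if adj u v ∧ (u ∈ Λ ∨ v ∈ Λ) then (inner ℝ (χ v) (s u - s v) : ℝ) else 0))
      = -(∑ u ∈ bigS Λ, ∑ v ∈ bigS Λ,
        (if adj u v ∧ (u ∈ Λ ∨ v ∈ Λ) then (inner ℝ (χ u) (s u - s v) : ℝ) else 0)) := by
    rw [Finset.sum_comm, ← Finset.sum_neg_distrib]
    refine Finset.sum_congr rfl fun u _ => ?_
    rw [← Finset.sum_neg_distrib]
    refine Finset.sum_congr rfl fun v _ => ?_
    rw [if_congr (hor v u) rfl rfl]
    split_ifs with h
    · rw [← inner_neg_right (𝕜 := ℝ)]; congr 1; abel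
    · ring
  rw [hB, sub_neg_eq_add, ← two_mul]
  congr 1
  rw [pairing_eq_sum]
  refine Finset.sum_congr rfl fun u hu => ?_
  have step : ∀ v : Vert d,
      (if adj u v ∧ (u ∈ Λ ∨ v ∈ Λ) then (inner ℝ (χ u) (s u - s v) : ℝ) else 0)
      = (inner ℝ (χ u) (if adj u v ∧ (u ∈ Λ ∨ v ∈ Λ) then s u - s v else 0) : ℝ) := by
    intro v; split_ifs with h
    · rfl
    · rw [inner_zero_right]
  simp only [step]
  rw [← inner_sum (𝕜 := ℝ)]
  congr 1
  rw [lap_eq_sum, ← Finset.sum_neg_distrib]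
  refine Finset.sum_congr rfl fun v _ => ?_
  rw [if_congr (hor v u) rfl rfl]
  split_ifs with h
  · abel
  · simp

lemma dir_expand (Λ : Finset (Vert d)) (χ s : Vert d → Pt n) :
    dirEnergy Λ (fun v => χ v + s v) =
      dirEnergy Λ χ + 2 * pairing χ (fun v => -lap Λ s v) + dirEnergy Λ s := by
  have key : ∀ u v : Vert d,
      (if adj u v ∧ (u ∈ Λ ∨ v ∈ Λ) then ‖(χ u + s u) - (χ v + s v)‖ ^ 2 else 0)
      = (if adj u v ∧ (u ∈ Λ ∨ v ∈ Λ) then ‖χ u - χ v‖ ^ 2 else 0)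
        + 2 * (if adj u v ∧ (u ∈ Λ ∨ v ∈ Λ) then (inner ℝ (χ u - χ v) (s u - s v) : ℝ) else 0)
        + (if adj u v ∧ (u ∈ Λ ∨ v ∈ Λ) then ‖s u - s v‖ ^ 2 else 0) := by
    intro u v; split_ifs with h
    · rw [show (χ u + s u) - (χ v + s v) = (χ u - χ v) + (s u - s v) by abel]
      rw [norm_add_sq_real]
    · ring
  rw [dirEnergy_eq_sum Λ (fun v => χ v + s v), dirEnergy_eq_sum Λ χ, dirEnergy_eq_sum Λ s]
  simp only [key, Finset.sum_add_distrib, ← Finset.mul_sum]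
  rw [cross_sum]
  ring

lemma ham_shift (η : Vert d → Pt n → ℝ) (Λ : Finset (Vert d)) (s χ : Vert d → Pt n) :
    hamiltonian η Λ (fun v => χ v + s v)
      = hamiltonian (shiftEnv η (fun v => -s v)) Λ χ
        + pairing χ (fun v => -lap Λ s v) + (1 / 2) * dirEnergy Λ s
        + ∑ v ∈ Λ, η v (s v) := by
  unfold hamiltonian shiftEnv
  simp only [sub_neg_eq_add, neg_neg]
  rw [dir_expand Λ χ s, Finset.sum_sub_distrib]
  ring

end Aux

/-- **Comparison of the minimizer with its shifted version** (deterministic part of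
Proposition 4.4). -/
theorem minimizer_shift_comparison {d n : ℕ} (hd : 1 ≤ d) (hn : 1 ≤ n)
    (Λ : Finset (Vert d)) (η : Vert d → Pt n → ℝ)
    (s : Vert d → Pt n) (hs : ∀ v ∉ Λ, s v = 0)
    (φ ψ : Vert d → Pt n)
    (hφ : (∀ v ∉ Λ, φ v = 0) ∧ ∀ χ : Vert d → Pt n, (∀ v ∉ Λ, χ v = 0) →
      hamiltonian η Λ φ ≤ hamiltonian η Λ χ)
    (hψ : (∀ v ∉ Λ, ψ v = 0) ∧ ∀ χ : Vert d → Pt n, (∀ v ∉ Λ, χ v = 0) →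
      hamiltonian (shiftEnv η (fun v => -s v)) Λ ψ ≤
        hamiltonian (shiftEnv η (fun v => -s v)) Λ χ) :
    0 ≤ hamiltonian η Λ (fun v => ψ v + s v) - hamiltonian η Λ φ ∧
    hamiltonian η Λ (fun v => ψ v + s v) - hamiltonian η Λ φ ≤
      pairing (fun v => ψ v + s v - φ v) (fun v => -lap Λ s v) := by
  constructor
  · have h1 := hφ.2 (fun v => ψ v + s v) (fun v hv => by show ψ v + s v = 0; rw [hψ.1 v hv, hs v hv, add_zero])
    linarith
  · have e1 := ham_shift η Λ s ψ
    have e2 := ham_shift η Λ s (fun v => φ v - s v)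
    rw [show (fun v => (φ v - s v) + s v) = φ from funext fun v => by abel] at e2
    have hmin := hψ.2 (fun v => φ v - s v)
      (fun v hv => by show φ v - s v = 0; rw [hφ.1 v hv, hs v hv, sub_zero])
    have hpair : pairing ψ (fun v => -lap Λ s v)
        - pairing (fun v => φ v - s v) (fun v => -lap Λ s v)
        = pairing (fun v => ψ v + s v - φ v) (fun v => -lap Λ s v) := by
      rw [pairing_eq_sum, pairing_eq_sum, pairing_eq_sum, ← Finset.sum_sub_distrib]
      refine Finset.sum_congr rfl fun v _ => ?_
      rw [← inner_sub_left (𝕜 := ℝ)]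
      congr 1
      abel
    linarith


end
end

section
/- Fractional Brownian covariance estimate (Claim A.1). Let n ≥ 1 be an integer, H ∈ (0,1), and let e₁ ∈ ℝ^n be the first standard basis vector. For every t ∈ ℝ^n: 2‖t‖^{2H} + 2 − ‖t − e₁‖^{2H} − ‖t + e₁‖^{2H} ≤ min( 2(‖t‖^{2H} + ‖t‖), 8 ), and 2‖t‖^{2H} + 2 − ‖t − e₁‖^{2H} − ‖t + e₁‖^{2H} ≥ 2( ‖t‖^{2H} + 1 − (‖t‖² + 1)^H ) ≥ 0, where ‖·‖ is the Euclidean norm on ℝ^n and powers are real powers. -/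
open MeasureTheory ProbabilityTheory

noncomputable section

/-- Subadditivity of `x ^ p` for `p ≤ 1`. -/
lemma fbm_aux_rpow_subadd {p x y : ℝ} (hx : 0 ≤ x) (hy : 0 ≤ y) (hp : 0 ≤ p)
    (hp1 : p ≤ 1) : (x + y) ^ p ≤ x ^ p + y ^ p := by
  have h := NNReal.rpow_add_le_add_rpow x.toNNReal y.toNNReal hp hp1
  rw [← Real.coe_toNNReal x hx, ← Real.coe_toNNReal y hy]
  exact_mod_cast h

/-- Spreading a pair while keeping the sum decreases `x ^ p + y ^ p` for concave power. -/
lemma fbm_aux_transfer {p u v u' v' : ℝ} (hp0 : 0 < p) (hp1 : p < 1)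
    (hv' : 0 ≤ v') (h1 : v' ≤ u) (h2 : u ≤ u') (h3 : v' ≤ v)
    (hsum : u + v = u' + v') :
    u' ^ p + v' ^ p ≤ u ^ p + v ^ p := by
  have hconc := (Real.strictConcaveOn_rpow hp0 hp1).concaveOn
  have hu' : 0 ≤ u' := le_trans hv' (h1.trans h2)
  rcases eq_or_lt_of_le (h1.trans h2 : v' ≤ u') with heq | hlt
  · have hu : u = u' := le_antisymm h2 (heq ▸ h1)
    have hv : v = v' := by linarith
    rw [hu, hv]
  · set l := (u - v') / (u' - v') with hl
    have hd : 0 < u' - v' := by linarith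
    have hl0 : 0 ≤ l := div_nonneg (by linarith) hd.le
    have hl1 : l ≤ 1 := (div_le_one hd).2 (by linarith)
    have e1 : l * u' + (1 - l) * v' = u := by
      have hk : l * (u' - v') = u - v' := by rw [hl]; exact div_mul_cancel₀ _ hd.ne'
      linear_combination hk
    have e2 : (1 - l) * u' + l * v' = v := by
      have hv : v = u' + v' - u := by linarith
      rw [hv]
      have hk : l * (u' - v') = u - v' := by rw [hl]; exact div_mul_cancel₀ _ hd.ne'
      linear_combination (-1 : ℝ) * hk
    have k1 := hconc.2 (Set.mem_Ici.2 hu') (Set.mem_Ici.2 hv') hl0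
      (by linarith : (0:ℝ) ≤ 1 - l) (by ring)
    have k2 := hconc.2 (Set.mem_Ici.2 hu') (Set.mem_Ici.2 hv')
      (by linarith : (0:ℝ) ≤ 1 - l) hl0 (by ring)
    simp only [smul_eq_mul] at k1 k2
    rw [e1] at k1
    rw [e2] at k2
    linarith

set_option maxHeartbeats 1000000 in
/-- **Fractional Brownian covariance estimate** (Claim A.1). -/
theorem fbm_covariance_estimate {n : ℕ} (hn : 0 < n) (H : ℝ)
    (hH : H ∈ Set.Ioo (0 : ℝ) 1)
    (e₁ : Pt n) (he₁ : e₁ = EuclideanSpace.single (⟨0, hn⟩ : Fin n) 1)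
    (t : Pt n) :
    2 * ‖t‖ ^ (2 * H) + 2 - ‖t - e₁‖ ^ (2 * H) - ‖t + e₁‖ ^ (2 * H) ≤
        min (2 * (‖t‖ ^ (2 * H) + ‖t‖)) 8 ∧
    2 * (‖t‖ ^ (2 * H) + 1 - (‖t‖ ^ 2 + 1) ^ H) ≤
        2 * ‖t‖ ^ (2 * H) + 2 - ‖t - e₁‖ ^ (2 * H) - ‖t + e₁‖ ^ (2 * H) ∧
    0 ≤ 2 * (‖t‖ ^ (2 * H) + 1 - (‖t‖ ^ 2 + 1) ^ H) := by
  obtain ⟨hH0, hH1⟩ := hH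
  have hne : ‖e₁‖ = 1 := by rw [he₁, EuclideanSpace.norm_single]; norm_num
  set a : ℝ := ‖t‖ with haa
  have ha : 0 ≤ a := norm_nonneg t
  set c : ℝ := inner ℝ t e₁ with hcc
  have hcabs : |c| ≤ a := by
    have h := abs_real_inner_le_norm t e₁
    rwa [hne, mul_one] at h
  obtain ⟨hc1, hc2⟩ := abs_le.1 hcabs
  have hr : ∀ x : Pt n, ‖x‖ ^ (2 * H) = (‖x‖ ^ 2 : ℝ) ^ H := by
    intro x
    rw [show (2:ℝ) * H = ((2:ℕ):ℝ) * H by norm_num,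
      Real.rpow_natCast_mul (norm_nonneg x)]
  have hsubsq : (‖t - e₁‖ ^ 2 : ℝ) = a ^ 2 - 2 * c + 1 := by
    rw [norm_sub_sq_real, hne]; ring
  have haddsq : (‖t + e₁‖ ^ 2 : ℝ) = a ^ 2 + 2 * c + 1 := by
    rw [norm_add_sq_real, hne]; ring
  rw [hr t, hr (t - e₁), hr (t + e₁), hsubsq, haddsq]
  set w : ℝ := a ^ 2 with hww
  set u : ℝ := w + 2 * c + 1 with huu
  set v : ℝ := w - 2 * c + 1 with hvv
  -- transfer to the extreme configuration
  have key : ((a + 1) ^ 2) ^ H + ((a - 1) ^ 2) ^ H ≤ u ^ H + v ^ H := by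
    rcases le_total c 0 with hc0 | hc0
    · exact fbm_aux_transfer hH0 hH1 (by positivity) (by nlinarith) (by nlinarith)
        (by nlinarith) (by ring)
    · have := fbm_aux_transfer hH0 hH1 (p := H) (u := v) (v := u)
        (u' := (a + 1) ^ 2) (v' := (a - 1) ^ 2) (by positivity) (by nlinarith)
        (by nlinarith) (by nlinarith) (by ring)
      linarith
  have hu0 : 0 ≤ u := by nlinarith
  have hv0 : 0 ≤ v := by nlinarith
  have hconc := (Real.strictConcaveOn_rpow hH0 hH1).concaveOn
  -- midpoint concavity : u^H + v^H ≤ 2 (w+1)^H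
  have mid : u ^ H + v ^ H ≤ 2 * (w + 1) ^ H := by
    have k := hconc.2 (Set.mem_Ici.2 hu0) (Set.mem_Ici.2 hv0)
      (by norm_num : (0:ℝ) ≤ 1/2) (by norm_num : (0:ℝ) ≤ 1/2) (by norm_num)
    simp only [smul_eq_mul] at k
    have : (1:ℝ)/2 * u + 1/2 * v = w + 1 := by rw [huu, hvv]; ring
    rw [this] at k
    linarith
  -- subadditivity : (w+1)^H ≤ w^H + 1
  have sub1 : (w + 1) ^ H ≤ w ^ H + 1 := by
    have h := fbm_aux_rpow_subadd (by positivity : (0:ℝ) ≤ w) zero_le_one hH0.le hH1.le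
    rwa [Real.one_rpow] at h
  have hone : (1:ℝ) ≤ ((a + 1) ^ 2) ^ H := by
    calc (1:ℝ) = 1 ^ H := (Real.one_rpow H).symm
    _ ≤ ((a + 1) ^ 2) ^ H := Real.rpow_le_rpow zero_le_one (by nlinarith) hH0.le
  refine ⟨le_min ?_ ?_, by linarith, by linarith⟩
  · -- ≤ 2 (w^H + a)
    have h2 : 1 - 2 * a ≤ ((a - 1) ^ 2) ^ H := by
      rcases le_total ((1:ℝ)/2) a with h | h
      · have := Real.rpow_nonneg (by positivity : (0:ℝ) ≤ (a - 1) ^ 2) H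
        linarith
      · have hx0 : (0:ℝ) < (a - 1) ^ 2 := by nlinarith
        have hx1 : (a - 1) ^ 2 ≤ 1 := by nlinarith
        have := Real.rpow_le_rpow_of_exponent_ge hx0 hx1 hH1.le
        rw [Real.rpow_one] at this
        nlinarith
    linarith
  · -- ≤ 8
    rcases le_total H (1/2) with hH2 | hH2
    · -- 2H ≤ 1 : subadditivity bound
      have hb : w ^ H ≤ ((a - 1) ^ 2) ^ H + 1 := by
        set x : ℝ := |a - 1| with hxx
        have hx0 : 0 ≤ x := abs_nonneg _
        have hax : a ≤ x + 1 := by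
          rcases abs_cases (a - 1) with ⟨h, _⟩ | ⟨h, _⟩ <;> rw [hxx] <;> linarith
        have e1 : w ^ H = a ^ (2 * H) := by
          rw [show (2:ℝ) * H = ((2:ℕ):ℝ) * H by norm_num,
            Real.rpow_natCast_mul ha]
        have e2 : ((a - 1) ^ 2) ^ H = x ^ (2 * H) := by
          rw [show (2:ℝ) * H = ((2:ℕ):ℝ) * H by norm_num,
            Real.rpow_natCast_mul hx0, hxx, sq_abs]
        rw [e1, e2]
        calc a ^ (2 * H) ≤ (x + 1) ^ (2 * H) :=
              Real.rpow_le_rpow ha hax (by linarith)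
          _ ≤ x ^ (2 * H) + 1 ^ (2 * H) :=
              fbm_aux_rpow_subadd hx0 zero_le_one (by linarith) (by linarith)
          _ = x ^ (2 * H) + 1 := by rw [Real.one_rpow]
      have hb2 : w ^ H ≤ ((a + 1) ^ 2) ^ H :=
        Real.rpow_le_rpow (by positivity) (by nlinarith) hH0.le
      linarith
    · -- 2H ≥ 1 : convexity bound
      rcases le_total 1 a with h1a | h1a
      · have hconv := convexOn_rpow (by linarith : (1:ℝ) ≤ 2 * H)
        have k := hconv.2 (Set.mem_Ici.2 (by linarith : (0:ℝ) ≤ a + 1))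
          (Set.mem_Ici.2 (by linarith : (0:ℝ) ≤ a - 1))
          (by norm_num : (0:ℝ) ≤ 1/2) (by norm_num : (0:ℝ) ≤ 1/2) (by norm_num)
        simp only [smul_eq_mul] at k
        have e0 : (1:ℝ)/2 * (a + 1) + 1/2 * (a - 1) = a := by ring
        rw [e0] at k
        have e1 : (a + 1) ^ (2 * H) = ((a + 1) ^ 2) ^ H := by
          rw [show (2:ℝ) * H = ((2:ℕ):ℝ) * H by norm_num,
            Real.rpow_natCast_mul (by linarith : (0:ℝ) ≤ a + 1)]
        have e2 : (a - 1) ^ (2 * H) = ((a - 1) ^ 2) ^ H := by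
          rw [show (2:ℝ) * H = ((2:ℕ):ℝ) * H by norm_num,
            Real.rpow_natCast_mul (by linarith : (0:ℝ) ≤ a - 1)]
        have e3 : a ^ (2 * H) = w ^ H := by
          rw [show (2:ℝ) * H = ((2:ℕ):ℝ) * H by norm_num,
            Real.rpow_natCast_mul ha]
        rw [e1, e2, e3] at k
        linarith
      · have hw1 : w ^ H ≤ 1 := Real.rpow_le_one (by positivity) (by nlinarith) hH0.le
        have h0 : (0:ℝ) ≤ ((a - 1) ^ 2) ^ H := Real.rpow_nonneg (by positivity) H
        linarith


end
end

section
/- Covariance bounds for the noise decomposition (analytic core of Lemma 4.5). Let n ≥ 1 be an integer and H ∈ (0,1). There exist real numbers β ≥ α ≥ 1, depending only on H, such that for every real h ≥ 1 and every t ∈ ℝ^n, the quantity K_h(t) := (1/2)·( 2‖t‖^{2H} + 2(αh)^{2H} − ‖t − αh·e₁‖^{2H} − ‖t + αh·e₁‖^{2H} ) satisfies: (i) 0 ≤ K_h(t) ≤ 4(αh)^{2H} for all t ∈ ℝ^n; (ii) K_h(t) ≤ (1/8)(αh)^{2H} whenever ‖t‖ ≤ h; (iii) K_h(t) ≥ (1/2)(αh)^{2H}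 whenever ‖t‖ ≥ βh. (K_h(t) equals the covariance of η(v,t) with η(v, αh·e₁) + η(v, −αh·e₁) for a fractional Brownian field of Hurst parameter H.) -/
open MeasureTheory ProbabilityTheory

noncomputable section

set_option maxHeartbeats 2000000

private lemma rpow_subadd {p A B : ℝ} (hp0 : 0 ≤ p) (hp1 : p ≤ 1) (hA : 0 ≤ A) (hB : 0 ≤ B) :
    (A + B) ^ p ≤ A ^ p + B ^ p := by
  have h := NNReal.rpow_add_le_add_rpow A.toNNReal B.toNNReal hp0 hp1
  have h2 := NNReal.coe_le_coe.2 h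
  push_cast at h2
  rwa [Real.coe_toNNReal A hA, Real.coe_toNNReal B hB] at h2

private lemma rpow_concave_two {p A B : ℝ} (hp0 : 0 ≤ p) (hp1 : p ≤ 1) (hA : 0 ≤ A) (hB : 0 ≤ B) :
    A ^ p + B ^ p ≤ 2 * ((A + B) / 2) ^ p := by
  have h := (Real.concaveOn_rpow hp0 hp1).2 (Set.mem_Ici.2 hA) (Set.mem_Ici.2 hB)
    (by norm_num : (0:ℝ) ≤ 1/2) (by norm_num : (0:ℝ) ≤ 1/2) (by norm_num)
  simp only [smul_eq_mul] at h
  have e : (1/2 : ℝ) * A + (1/2 : ℝ) * B = (A + B) / 2 := by ring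
  rw [e] at h
  linarith

private lemma rpow_convex_two {p A B : ℝ} (hp : 1 ≤ p) (hA : 0 ≤ A) (hB : 0 ≤ B) :
    2 * ((A + B) / 2) ^ p ≤ A ^ p + B ^ p := by
  have h := (convexOn_rpow hp).2 (Set.mem_Ici.2 hA) (Set.mem_Ici.2 hB)
    (by norm_num : (0:ℝ) ≤ 1/2) (by norm_num : (0:ℝ) ≤ 1/2) (by norm_num)
  simp only [smul_eq_mul] at h
  have e : (1/2 : ℝ) * A + (1/2 : ℝ) * B = (A + B) / 2 := by ring
  rw [e] at h
  linarith

private lemma sq_rpow {x : ℝ} (hx : 0 ≤ x) (H : ℝ) : x ^ (2 * H) = (x ^ 2) ^ H := by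
  rw [← Real.rpow_natCast x 2, ← Real.rpow_mul hx]
  norm_num

private lemma core_lemma (H A B h r u v : ℝ) (hH0 : 0 < H) (hH1 : H < 1)
    (hA : A = 32 * (16 : ℝ) ^ (1 / (2 * H))) (hB : B = (2 : ℝ) ^ (1 / (2 - 2 * H)) * A)
    (hh : 1 ≤ h) (hr : 0 ≤ r) (hu : 0 ≤ u) (hv : 0 ≤ v)
    (par : u ^ 2 + v ^ 2 = 2 * (r ^ 2 + (A * h) ^ 2))
    (tri1 : r ≤ u + A * h) (tri2 : r ≤ v + A * h) (tri3 : 2 * r ≤ u + v)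
    (tri4 : A * h - r ≤ u) (tri5 : A * h - r ≤ v) :
    (0 ≤ (1/2) * (2 * r ^ (2*H) + 2 * (A*h) ^ (2*H) - u ^ (2*H) - v ^ (2*H)) ∧
      (1/2) * (2 * r ^ (2*H) + 2 * (A*h) ^ (2*H) - u ^ (2*H) - v ^ (2*H)) ≤ 4 * (A*h) ^ (2*H)) ∧
    (r ≤ h → (1/2) * (2 * r ^ (2*H) + 2 * (A*h) ^ (2*H) - u ^ (2*H) - v ^ (2*H)) ≤ (1/8) * (A*h) ^ (2*H)) ∧
    (B * h ≤ r → (1/2) * (A*h) ^ (2*H) ≤ (1/2) * (2 * r ^ (2*H) + 2 * (A*h) ^ (2*H) - u ^ (2*H) - v ^ (2*H))) := by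
  have h16 : (1:ℝ) ≤ (16 : ℝ) ^ (1 / (2 * H)) := by
    calc (1:ℝ) = 1 ^ (1 / (2*H)) := (Real.one_rpow _).symm
    _ ≤ 16 ^ (1 / (2*H)) := Real.rpow_le_rpow (by norm_num) (by norm_num) (by positivity)
  have hA32 : (32:ℝ) ≤ A := by rw [hA]; nlinarith
  have hApos : (0:ℝ) < A := by linarith
  have hhpos : (0:ℝ) < h := by linarith
  have ha : (0:ℝ) < A * h := by positivity
  have hH2 : (0:ℝ) < 2 * H := by linarith
  have hAc : (16:ℝ) ≤ A ^ (2 * H) := by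
    rw [hA, Real.mul_rpow (by norm_num) (by positivity), ← Real.rpow_mul (by norm_num : (0:ℝ) ≤ 16),
      one_div_mul_cancel (ne_of_gt hH2), Real.rpow_one]
    nlinarith [Real.one_le_rpow (by norm_num : (1:ℝ) ≤ 32) (le_of_lt hH2)]
  -- shared chain
  have key1 : u ^ (2*H) + v ^ (2*H) ≤ 2 * (r^2 + (A*h)^2) ^ H := by
    rw [sq_rpow hu, sq_rpow hv]
    have := rpow_concave_two (le_of_lt hH0) (le_of_lt hH1) (sq_nonneg u) (sq_nonneg v)
    have e : (u^2 + v^2)/2 = r^2 + (A*h)^2 := by linarith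
    rwa [e] at this
  have key2 : (r^2 + (A*h)^2) ^ H ≤ r ^ (2*H) + (A*h) ^ (2*H) := by
    rw [sq_rpow hr, sq_rpow (le_of_lt ha)]
    exact rpow_subadd (le_of_lt hH0) (le_of_lt hH1) (sq_nonneg r) (sq_nonneg _)
  have hanonneg : (0:ℝ) ≤ (A*h) ^ (2*H) := Real.rpow_nonneg ha.le _
  refine ⟨⟨by linarith, ?_⟩, ?_, ?_⟩
  · -- upper bound: 2 r^c ≤ u^c + v^c + 6 a^c
    rcases le_or_gt (2*H) 1 with hc | hc
    · have h1 : r ^ (2*H) ≤ u ^ (2*H) + (A*h) ^ (2*H) :=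
        le_trans (Real.rpow_le_rpow hr tri1 (le_of_lt hH2))
          (rpow_subadd (le_of_lt hH2) hc hu (le_of_lt ha))
      have h2 : r ^ (2*H) ≤ v ^ (2*H) + (A*h) ^ (2*H) :=
        le_trans (Real.rpow_le_rpow hr tri2 (le_of_lt hH2))
          (rpow_subadd (le_of_lt hH2) hc hv (le_of_lt ha))
      linarith
    · have h1 : r ^ (2*H) ≤ ((u+v)/2) ^ (2*H) :=
        Real.rpow_le_rpow hr (by linarith) (le_of_lt hH2)
      have h2 := rpow_convex_two (le_of_lt hc) hu hv
      linarith
  · -- (ii)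
    intro hrh
    have hb0 : (0:ℝ) ≤ A * h - h := by nlinarith
    have hub : A * h - h ≤ u := by linarith
    have hvb : A * h - h ≤ v := by linarith
    have h1 : (A*h - h) ^ (2*H) ≤ u ^ (2*H) := Real.rpow_le_rpow hb0 hub (le_of_lt hH2)
    have h2 : (A*h - h) ^ (2*H) ≤ v ^ (2*H) := Real.rpow_le_rpow hb0 hvb (le_of_lt hH2)
    have h3 : r ^ (2*H) ≤ h ^ (2*H) := Real.rpow_le_rpow hr hrh (le_of_lt hH2)
    have hah : (A*h) ^ (2*H) = A ^ (2*H) * h ^ (2*H) :=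
      Real.mul_rpow (le_of_lt hApos) (le_of_lt hhpos)
    have hhc : h ^ (2*H) ≤ (A*h) ^ (2*H) / 16 := by
      rw [hah]
      have hp : (0:ℝ) < h ^ (2*H) := Real.rpow_pos_of_pos hhpos _
      nlinarith
    have hbc : (15/16) * (A*h) ^ (2*H) ≤ (A*h - h) ^ (2*H) := by
      have e : A * h - h = (A*h) * (1 - 1/A) := by field_simp
      have hx0 : (0:ℝ) < 1 - 1/A := by
        have : 1/A ≤ 1/32 := by
          rw [div_le_div_iff₀ hApos (by norm_num)]; linarith
        linarith
      have hx1 : (1:ℝ) - 1/A ≤ 1 := by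
        have : (0:ℝ) ≤ 1/A := by positivity
        linarith
      rw [e, Real.mul_rpow (le_of_lt ha) (le_of_lt hx0)]
      have hmono : (1 - 1/A) ^ (2:ℝ) ≤ (1 - 1/A) ^ (2*H) :=
        Real.rpow_le_rpow_of_exponent_ge hx0 hx1 (by linarith)
      have hx132 : (31/32:ℝ) ≤ 1 - 1/A := by
        have h1A : 1/A ≤ 1/32 := by
          rw [div_le_div_iff₀ hApos (by norm_num)]; linarith
        linarith
      have hsq : (1 - 1/A) ^ (2:ℝ) = (1 - 1/A) * (1 - 1/A) := by
        have hq := Real.rpow_natCast (1 - 1/A) 2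
        push_cast at hq
        rw [hq]; ring
      have hlow : (15/16 : ℝ) ≤ (1 - 1/A) ^ (2:ℝ) := by rw [hsq]; nlinarith
      have h1516 : (15/16 : ℝ) ≤ (1 - 1/A) ^ (2*H) := le_trans hlow hmono
      nlinarith
    linarith
  · -- (iii)
    intro hrB
    have hBA : A ≤ B := by
      rw [hB]
      nlinarith [Real.one_le_rpow (by norm_num : (1:ℝ) ≤ 2) (le_of_lt (one_div_pos.2 (by linarith : (0:ℝ) < 2-2*H)))]
    have hrpos : (0:ℝ) < r := by nlinarith
    have h2c : (0:ℝ) < 2 - 2*H := by linarith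
    have hkpow : ((2:ℝ) ^ (1/(2-2*H))) ^ (2-2*H) = 2 := by
      rw [← Real.rpow_mul (by norm_num : (0:ℝ) ≤ 2), one_div_mul_cancel (ne_of_gt h2c), Real.rpow_one]
    have hstep : 2 * (A*h) ^ (2-2*H) ≤ r ^ (2-2*H) := by
      have hr1 : (2:ℝ) ^ (1/(2-2*H)) * (A*h) ≤ r := by
        have : B * h = (2:ℝ) ^ (1/(2-2*H)) * (A*h) := by rw [hB]; ring
        linarith
      calc 2 * (A*h) ^ (2-2*H) = ((2:ℝ) ^ (1/(2-2*H))) ^ (2-2*H) * (A*h) ^ (2-2*H) := by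
            rw [hkpow]
        _ = ((2:ℝ) ^ (1/(2-2*H)) * (A*h)) ^ (2-2*H) :=
            (Real.mul_rpow (by positivity) (le_of_lt ha)).symm
        _ ≤ r ^ (2-2*H) := Real.rpow_le_rpow (by positivity) hr1 (le_of_lt h2c)
    have hsplit : ∀ x : ℝ, 0 < x → x ^ (2*H) * x ^ (2-2*H) = x ^ 2 := by
      intro x hx
      rw [← Real.rpow_add hx]
      have e2 : 2*H + (2-2*H) = (2:ℝ) := by ring
      rw [e2, ← Real.rpow_natCast x 2]; norm_num
    have h3 : 2 * ((A*h)^2 * r ^ (2*H)) ≤ (A*h) ^ (2*H) * r ^ 2 := by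
      have e1 := hsplit r hrpos
      have e2 := hsplit (A*h) ha
      have hm : (A*h) ^ (2*H) * r ^ (2*H) * (2 * (A*h) ^ (2-2*H)) ≤
          (A*h) ^ (2*H) * r ^ (2*H) * r ^ (2-2*H) := by
        apply mul_le_mul_of_nonneg_left hstep
        positivity
      calc 2 * ((A*h)^2 * r ^ (2*H)) = (A*h) ^ (2*H) * r ^ (2*H) * (2 * (A*h) ^ (2-2*H)) := by
            rw [← e2]; ring
        _ ≤ (A*h) ^ (2*H) * r ^ (2*H) * r ^ (2-2*H) := hm
        _ = (A*h) ^ (2*H) * r ^ 2 := by rw [mul_assoc, e1]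
    have hr2 : (0:ℝ) < r ^ 2 := by positivity
    have h2 : (r^2 + (A*h)^2) ^ H * r ^ 2 ≤ r ^ (2*H) * (r^2 + (A*h)^2) := by
      have e : r^2 + (A*h)^2 = r^2 * (1 + (A*h)^2 / r^2) := by field_simp
      have hbase : (1:ℝ) ≤ 1 + (A*h)^2 / r^2 := by
        have : (0:ℝ) ≤ (A*h)^2 / r^2 := by positivity
        linarith
      have hber : (1 + (A*h)^2 / r^2) ^ H ≤ 1 + (A*h)^2 / r^2 := by
        nth_rewrite 2 [← Real.rpow_one (1 + (A*h)^2 / r^2)]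
        exact Real.rpow_le_rpow_of_exponent_le hbase (le_of_lt hH1)
      calc (r^2 + (A*h)^2) ^ H * r ^ 2
          = (r^2) ^ H * (1 + (A*h)^2 / r^2) ^ H * r ^ 2 := by
            rw [e, Real.mul_rpow (le_of_lt hr2) (by positivity)]
        _ ≤ (r^2) ^ H * (1 + (A*h)^2 / r^2) * r ^ 2 := by
            have h0 : (0:ℝ) ≤ (r^2) ^ H := Real.rpow_nonneg (le_of_lt hr2) _
            exact mul_le_mul_of_nonneg_right (mul_le_mul_of_nonneg_left hber h0) (le_of_lt hr2)
        _ = r ^ (2*H) * (r^2 + (A*h)^2) := by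
            rw [← sq_rpow hr, e]; ring
    -- conclude: (r²+a²)^H ≤ r^{2H} + (1/2) (Ah)^{2H}
    have hfin : (r^2 + (A*h)^2) ^ H ≤ r ^ (2*H) + (1/2) * (A*h) ^ (2*H) := by
      rw [← mul_le_mul_iff_of_pos_right hr2]
      calc (r^2 + (A*h)^2) ^ H * r ^ 2 ≤ r ^ (2*H) * (r^2 + (A*h)^2) := h2
        _ = r ^ (2*H) * r ^ 2 + (A*h)^2 * r ^ (2*H) := by ring
        _ ≤ r ^ (2*H) * r ^ 2 + (1/2) * ((A*h) ^ (2*H) * r ^ 2) := by linarith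
        _ = (r ^ (2*H) + (1/2) * (A*h) ^ (2*H)) * r ^ 2 := by ring
    linarith


/-- **Covariance bounds for the noise decomposition** (analytic core of Lemma 4.5). -/
theorem noise_decomposition_covariance (H : ℝ) (hH : H ∈ Set.Ioo (0 : ℝ) 1) :
    ∃ α β : ℝ, 1 ≤ α ∧ α ≤ β ∧
      ∀ (n : ℕ) (hn : 0 < n) (h : ℝ), 1 ≤ h → ∀ t : Pt n,
        let e₁ : Pt n := EuclideanSpace.single (⟨0, hn⟩ : Fin n) 1
        let K : ℝ := (1 / 2) * (2 * ‖t‖ ^ (2 * H) + 2 * (α * h) ^ (2 * H) -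
          ‖t - (α * h) • e₁‖ ^ (2 * H) - ‖t + (α * h) • e₁‖ ^ (2 * H))
        (0 ≤ K ∧ K ≤ 4 * (α * h) ^ (2 * H)) ∧
        (‖t‖ ≤ h → K ≤ (1 / 8) * (α * h) ^ (2 * H)) ∧
        (β * h ≤ ‖t‖ → (1 / 2) * (α * h) ^ (2 * H) ≤ K) := by
  obtain ⟨hH0, hH1⟩ := hH
  have h16 : (1:ℝ) ≤ (16:ℝ) ^ (1/(2*H)) :=
    Real.one_le_rpow (by norm_num) (le_of_lt (one_div_pos.2 (by linarith : (0:ℝ) < 2*H)))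
  have h2r : (1:ℝ) ≤ (2:ℝ) ^ (1/(2-2*H)) :=
    Real.one_le_rpow (by norm_num) (le_of_lt (one_div_pos.2 (by linarith : (0:ℝ) < 2-2*H)))
  refine ⟨32 * (16:ℝ) ^ (1/(2*H)), (2:ℝ) ^ (1/(2-2*H)) * (32 * (16:ℝ) ^ (1/(2*H))),
    by nlinarith, by nlinarith, ?_⟩
  intro n hn h hh t e₁ K
  simp only [K, e₁]
  set A : ℝ := 32 * (16:ℝ) ^ (1/(2*H)) with hAdef
  set B : ℝ := (2:ℝ) ^ (1/(2-2*H)) * A with hBdef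
  have hApos : (0:ℝ) < A := by rw [hAdef]; nlinarith
  have hhpos : (0:ℝ) < h := by linarith
  have hapos : (0:ℝ) < A * h := by positivity
  set y : EuclideanSpace ℝ (Fin n) :=
    (A * h) • EuclideanSpace.single (⟨0, hn⟩ : Fin n) (1:ℝ) with hydef
  have he1 : ‖EuclideanSpace.single (⟨0, hn⟩ : Fin n) (1:ℝ)‖ = 1 := by
    rw [EuclideanSpace.norm_single]; norm_num
  have hy : ‖y‖ = A * h := by
    rw [hydef, norm_smul, he1, mul_one, Real.norm_eq_abs, abs_of_pos hapos]
  have par : ‖t - y‖ ^ 2 + ‖t + y‖ ^ 2 = 2 * (‖t‖ ^ 2 + (A*h) ^ 2) := by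
    have p := parallelogram_law_with_norm ℝ t y
    rw [hy] at p
    simp only [pow_two]
    linarith
  have tri1 : ‖t‖ ≤ ‖t - y‖ + A*h := by
    have e : t - y + y = t := by abel
    calc ‖t‖ = ‖t - y + y‖ := by rw [e]
      _ ≤ ‖t - y‖ + ‖y‖ := norm_add_le _ _
      _ = ‖t - y‖ + A*h := by rw [hy]
  have tri2 : ‖t‖ ≤ ‖t + y‖ + A*h := by
    have e : t + y - y = t := by abel
    calc ‖t‖ = ‖t + y - y‖ := by rw [e]
      _ ≤ ‖t + y‖ + ‖y‖ := norm_sub_le _ _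
      _ = ‖t + y‖ + A*h := by rw [hy]
  have tri3 : 2 * ‖t‖ ≤ ‖t - y‖ + ‖t + y‖ := by
    have e : t - y + (t + y) = (2:ℝ) • t := by
      rw [two_smul]; abel
    have h4 := norm_add_le (t - y) (t + y)
    rw [e, norm_smul, Real.norm_eq_abs] at h4
    rw [show |(2:ℝ)| = 2 by norm_num] at h4
    linarith
  have tri4 : A*h - ‖t‖ ≤ ‖t - y‖ := by
    have h5 := norm_sub_norm_le y t
    rw [hy, norm_sub_rev] at h5
    linarith
  have tri5 : A*h - ‖t‖ ≤ ‖t + y‖ := by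
    have h5 := norm_sub_norm_le y (-t)
    rw [hy, norm_neg, sub_neg_eq_add, add_comm] at h5
    linarith
  exact core_lemma H A B h ‖t‖ ‖t - y‖ ‖t + y‖ hH0 hH1 hAdef hBdef hh
    (norm_nonneg t) (norm_nonneg _) (norm_nonneg _) par tri1 tri2 tri3 tri4 tri5


end
end
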